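/- For the interrupted probing scheme, the normalization condition Σ_{k=0}^{d-1} π_k = 1 applied to the invariant vector π_k = π_0 · [1 - Σ_{j=0}^{k} C(d,j) ρ^{d-j} (1-ρ)^j] (with π_0's coefficient being 1 for k=0) yields π_0 = 1 / (ρ^d + (1-ρ)d). -/

import Mathlib

lemma swap_tri (n : ℕ) (f : ℕ → ℝ) :
    ∑ k ∈ Finset.range n, ∑ j ∈ Finset.range (k + 1), f j
      = ∑ j ∈ Finset.range n, ((n - j : ℕ) : ℝ) * f j := by
  induction n with
  | zero => simp
  | succ n ih =>
      have h1 : ∀ j ∈ Finset.range (n + 1),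
          ((n + 1 - j : ℕ) : ℝ) * f j = ((n - j : ℕ) : ℝ) * f j + f j := by
        intro j hj
        have hjn : j ≤ n := Nat.lt_succ_iff.mp (Finset.mem_range.mp hj)
        have e : (n + 1 - j : ℕ) = (n - j) + 1 := by omega
        rw [e]; push_cast; ring
      rw [Finset.sum_range_succ, ih, Finset.sum_congr rfl h1, Finset.sum_add_distrib,
        Finset.sum_range_succ (fun j => ((n - j : ℕ) : ℝ) * f j), Nat.sub_self]
      simp

lemma bern_eval (d ν : ℕ) (ρ : ℝ) :
    (bernsteinPolynomial ℝ d ν).eval (1 - ρ)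
      = (d.choose ν : ℝ) * (1 - ρ) ^ ν * ρ ^ (d - ν) := by
  simp [bernsteinPolynomial]

lemma bern_sum (d : ℕ) (ρ : ℝ) :
    ∑ j ∈ Finset.range (d + 1), (d.choose j : ℝ) * ρ ^ (d - j) * (1 - ρ) ^ j = 1 := by
  have h := congrArg (Polynomial.eval (1 - ρ)) (bernsteinPolynomial.sum ℝ d)
  simp only [Polynomial.eval_finset_sum, Polynomial.eval_one] at h
  calc ∑ j ∈ Finset.range (d + 1), (d.choose j : ℝ) * ρ ^ (d - j) * (1 - ρ) ^ j
      = ∑ j ∈ Finset.range (d + 1), (bernsteinPolynomial ℝ d j).eval (1 - ρ) :=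
        Finset.sum_congr rfl fun j _ => by rw [bern_eval]; ring
    _ = 1 := h

lemma bern_mean (d : ℕ) (ρ : ℝ) :
    ∑ j ∈ Finset.range (d + 1), (j : ℝ) * ((d.choose j : ℝ) * ρ ^ (d - j) * (1 - ρ) ^ j)
      = (d : ℝ) * (1 - ρ) := by
  have h := congrArg (Polynomial.eval (1 - ρ)) (bernsteinPolynomial.sum_smul ℝ d)
  simp only [Polynomial.eval_finset_sum, nsmul_eq_mul, Polynomial.eval_mul,
    Polynomial.eval_natCast, Polynomial.eval_X] at h
  calc ∑ j ∈ Finset.range (d + 1), (j : ℝ) * ((d.choose j : ℝ) * ρ ^ (d - j) * (1 - ρ) ^ j)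
      = ∑ j ∈ Finset.range (d + 1), (j : ℝ) * (bernsteinPolynomial ℝ d j).eval (1 - ρ) :=
        Finset.sum_congr rfl fun j _ => by rw [bern_eval]; ring
    _ = (d : ℝ) * (1 - ρ) := h

/-- Normalization of the interrupted-probing invariant vector yields
π_0 = 1/(ρ^d + (1-ρ)d), i.e. the identity
Σ_{k=0}^{d-1}[coefficients] = ρ^d + (1-ρ)d, with the k = 0 summand equal to 1. -/
theorem stmt1 (d : ℕ) (hd : 1 ≤ d) (ρ : ℝ) (hρ : ρ ∈ Set.Ioo (0:ℝ) 1) :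
    1 + ∑ k ∈ Finset.Ico 1 d, (1 - ∑ j ∈ Finset.range (k + 1),
      (d.choose j : ℝ) * ρ ^ (d - j) * (1 - ρ) ^ j) = ρ ^ d + (1 - ρ) * d := by
  set f : ℕ → ℝ := fun j => (d.choose j : ℝ) * ρ ^ (d - j) * (1 - ρ) ^ j with hf
  -- extend Ico 1 d to range d
  have h0 : (1 : ℝ) - ∑ j ∈ Finset.range (0 + 1), f j = 1 - ρ ^ d := by
    simp [hf]
  have hext : ∑ k ∈ Finset.range d, (1 - ∑ j ∈ Finset.range (k + 1), f j)
      = (1 - ρ ^ d) + ∑ k ∈ Finset.Ico 1 d, (1 - ∑ j ∈ Finset.range (k + 1), f j) := by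
    rw [show Finset.range d = Finset.Ico 0 d from Finset.range_eq_Ico d,
      Finset.sum_eq_sum_Ico_succ_bot (show 0 < d by omega), h0]
  have hsplit : ∑ k ∈ Finset.range d, (1 - ∑ j ∈ Finset.range (k + 1), f j)
      = (d : ℝ) - ∑ k ∈ Finset.range d, ∑ j ∈ Finset.range (k + 1), f j := by
    rw [Finset.sum_sub_distrib]
    simp
  have hswap := swap_tri d f
  -- Σ_{j<d} (d-j) f j = Σ_{j<d+1} (d-j) f j  since the j = d term vanishes
  have hfull : ∑ j ∈ Finset.range d, ((d - j : ℕ) : ℝ) * f j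
      = ∑ j ∈ Finset.range (d + 1), ((d - j : ℕ) : ℝ) * f j := by
    rw [Finset.sum_range_succ, Nat.sub_self]
    simp
  have hcast : ∀ j ∈ Finset.range (d + 1), ((d - j : ℕ) : ℝ) * f j
      = (d : ℝ) * f j - (j : ℝ) * f j := by
    intro j hj
    have : j ≤ d := Nat.lt_succ_iff.mp (Finset.mem_range.mp hj)
    rw [Nat.cast_sub this]; ring
  have hval : ∑ j ∈ Finset.range (d + 1), ((d - j : ℕ) : ℝ) * f j = (d : ℝ) * ρ := by
    rw [Finset.sum_congr rfl hcast, Finset.sum_sub_distrib, ← Finset.mul_sum,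
      bern_sum d ρ, bern_mean d ρ]
    ring
  have key : ∑ k ∈ Finset.range d, ∑ j ∈ Finset.range (k + 1), f j = (d : ℝ) * ρ := by
    rw [hswap, hfull, hval]
  have := hext.symm.trans (hsplit.trans (by rw [key]))
  linarith
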